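/- arXiv:2002.11941 — 2 statements merged into one kernel-verified Lean document; each statement's English description precedes it below -/
import Mathlib

section
/- Let L/K be an extension of number fields, let η ∈ O_K^× be a unit of O_K, let 𝔓 be a prime ideal of O_L lying over a prime ideal 𝔭 of O_K. If 𝔓 is a non-Wieferich prime of O_L with respect to η, then 𝔭 is a non-Wieferich prime of O_K with respect to η. -/
open NumberField

/-- A prime ideal `π` of a ring `S` (e.g. the ring of integers of a number field) is a
non-Wieferich prime with respect to `η ∈ S` if `η^(N(π)-1) ≡ 1 (mod π)` and
`η^(N(π)-1) ≢ 1 (mod π²)`, where `N(π) = |S ⧸ π|` is the absolute norm of `π`. -/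
def IsNonWieferich {S : Type*} [CommRing S] [Nontrivial S] [IsDedekindDomain S]
    [Module.Free ℤ S] (η : S) (π : Ideal S) : Prop :=
  η ^ (Ideal.absNorm π - 1) - 1 ∈ π ∧ η ^ (Ideal.absNorm π - 1) - 1 ∉ π ^ 2

set_option maxHeartbeats 1000000 in
set_option synthInstance.maxHeartbeats 400000 in
/-- Let `L/K` be an extension of number fields, `η` a unit of `𝓞 K`, and `𝔓` a prime ideal of
`𝓞 L` lying over a prime ideal `𝔭` of `𝓞 K`.  If `𝔓` is a non-Wieferich prime of `𝓞 L` with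
respect to `η`, then `𝔭` is a non-Wieferich prime of `𝓞 K` with respect to `η`. -/
theorem isNonWieferich_comap (K L : Type*) [Field K] [NumberField K] [Field L] [NumberField L]
    [Algebra K L] (η : (𝓞 K)ˣ)
    (𝔓 : Ideal (𝓞 L)) (h𝔓p : 𝔓.IsPrime) (h𝔓b : 𝔓 ≠ ⊥)
    (𝔭 : Ideal (𝓞 K)) (hover : 𝔓.comap (algebraMap (𝓞 K) (𝓞 L)) = 𝔭)
    (hw : IsNonWieferich (algebraMap (𝓞 K) (𝓞 L) (η : 𝓞 K)) 𝔓) :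
    IsNonWieferich (η : 𝓞 K) 𝔭 := by
  classical
  subst hover
  set f := algebraMap (𝓞 K) (𝓞 L) with hf
  set 𝔭 := 𝔓.comap f with h𝔭
  haveI h𝔭p : 𝔭.IsPrime := Ideal.IsPrime.comap f
  haveI : Algebra.IsIntegral (𝓞 K) (𝓞 L) := inferInstance
  have h𝔭b : 𝔭 ≠ ⊥ := by
    obtain ⟨x, hx, hx0⟩ := Submodule.exists_mem_ne_zero_of_ne_bot h𝔓b
    exact Ideal.comap_ne_bot_of_integral_mem hx0 hx (Algebra.IsIntegral.isIntegral x)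
  haveI : 𝔭.IsMaximal := Ideal.IsPrime.isMaximal h𝔭p h𝔭b
  haveI : 𝔓.IsMaximal := Ideal.IsPrime.isMaximal h𝔓p h𝔓b
  haveI hfinK : Finite ((𝓞 K) ⧸ 𝔭) :=
    (Ideal.absNorm_ne_zero_iff 𝔭).mp (by simpa [Ideal.absNorm_eq_zero_iff] using h𝔭b)
  haveI hfinL : Finite ((𝓞 L) ⧸ 𝔓) :=
    (Ideal.absNorm_ne_zero_iff 𝔓).mp (by simpa [Ideal.absNorm_eq_zero_iff] using h𝔓b)
  letI : Field ((𝓞 K) ⧸ 𝔭) := Ideal.Quotient.field 𝔭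
  letI : Field ((𝓞 L) ⧸ 𝔓) := Ideal.Quotient.field 𝔓
  haveI : Fintype ((𝓞 K) ⧸ 𝔭) := Fintype.ofFinite _
  haveI : Fintype ((𝓞 L) ⧸ 𝔓) := Fintype.ofFinite _
  letI : Algebra ((𝓞 K) ⧸ 𝔭) ((𝓞 L) ⧸ 𝔓) :=
    (Ideal.quotientMap 𝔓 f le_rfl).toAlgebra
  set q := Ideal.absNorm 𝔭 with hq
  set Q := Ideal.absNorm 𝔓 with hQ
  have hqc : q = Fintype.card ((𝓞 K) ⧸ 𝔭) := by
    rw [hq, Ideal.absNorm_apply, Submodule.cardQuot_apply, Nat.card_eq_fintype_card]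
  have hQc : Q = Fintype.card ((𝓞 L) ⧸ 𝔓) := by
    rw [hQ, Ideal.absNorm_apply, Submodule.cardQuot_apply, Nat.card_eq_fintype_card]
  -- Fermat:
  have hmem : (η : 𝓞 K) ^ (q - 1) - 1 ∈ 𝔭 := by
    rw [← Ideal.Quotient.eq_zero_iff_mem, map_sub, map_pow, map_one, sub_eq_zero, hqc]
    refine FiniteField.pow_card_sub_one_eq_one _ ?_
    have : IsUnit (Ideal.Quotient.mk 𝔭 (η : 𝓞 K)) := (η.isUnit).map _
    exact this.ne_zero
  -- divisibility of norms
  have hdvd : q - 1 ∣ Q - 1 := by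
    have hcard : Q = q ^ Module.finrank ((𝓞 K) ⧸ 𝔭) ((𝓞 L) ⧸ 𝔓) := by
      rw [hQc, hqc, Module.card_eq_pow_finrank (K := (𝓞 K) ⧸ 𝔭) (V := (𝓞 L) ⧸ 𝔓)]
    calc q - 1 = q - 1 ^ Module.finrank ((𝓞 K) ⧸ 𝔭) ((𝓞 L) ⧸ 𝔓) := by rw [one_pow]
      _ ∣ q ^ Module.finrank ((𝓞 K) ⧸ 𝔭) ((𝓞 L) ⧸ 𝔓)
            - 1 ^ Module.finrank ((𝓞 K) ⧸ 𝔭) ((𝓞 L) ⧸ 𝔓) := by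
            simpa using Nat.sub_dvd_pow_sub_pow q 1 _
      _ = Q - 1 := by rw [one_pow, ← hcard]
  refine ⟨hmem, fun hcon => hw.2 ?_⟩
  obtain ⟨m, hm⟩ := hdvd
  have hdvd2 : (η : 𝓞 K) ^ (q - 1) - 1 ∣ (η : 𝓞 K) ^ (Q - 1) - 1 := by
    rw [hm, pow_mul]
    simpa using sub_dvd_pow_sub_pow ((η : 𝓞 K) ^ (q - 1)) 1 m
  have key : (η : 𝓞 K) ^ (Q - 1) - 1 ∈ 𝔭 ^ 2 := by
    obtain ⟨c, hc⟩ := hdvd2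
    rw [hc]
    exact Ideal.mul_mem_right _ _ hcon
  have hle : Ideal.map f (𝔭 ^ 2) ≤ 𝔓 ^ 2 := by
    rw [Ideal.map_pow]
    exact Ideal.pow_right_mono Ideal.map_comap_le 2
  have : f ((η : 𝓞 K) ^ (Q - 1) - 1) ∈ 𝔓 ^ 2 := hle (Ideal.mem_map_of_mem f key)
  simpa [map_sub, map_pow, map_one] using this
end

section
/- Let L/K be an extension of number fields, let η ∈ O_K^× be a unit of O_K, and let 𝔭 be a prime ideal of O_K which splits completely in L/K. If 𝔭 is a non-Wieferich prime of O_K with respect to η, then every prime ideal 𝔓 of O_L lying over 𝔭 is a non-Wieferich prime of O_L with respect to η. -/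
open NumberField

set_option synthInstance.maxHeartbeats 1000000
set_option maxHeartbeats 1000000

/-- If the ramification index is `1`, an element of `p \ p²` maps to an element of `P \ P²`. -/
lemma not_mem_pow_two_of_ramificationIdx_eq_one {R S : Type*} [CommRing R] [IsDedekindDomain R] [CommRing S]
    [IsDedekindDomain S] (f : R →+* S) {p : Ideal R} {P : Ideal S} (hP : P.IsPrime)
    (hP0 : P ≠ ⊥) (hmapne : Ideal.map f p ≠ ⊥) (hcomap : P.comap f = p)
    (he : @Ideal.ramificationIdx' R _ S _ f.toAlgebra p P = 1) {x : R} (hx1 : x ∈ p) (hx2 : x ∉ p ^ 2) :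
    f x ∉ P ^ 2 := by
  classical
  letI := f.toAlgebra
  have hPprime : Prime P := Ideal.prime_of_isPrime hP0 hP
  have hPirr := hPprime.irreducible
  -- `map f p` is not contained in `P ^ 2`
  have hnle : ¬ Ideal.map f p ≤ P ^ 2 := by
    intro hle
    have hdvd : P ^ 2 ∣ Ideal.map f p := Ideal.dvd_iff_le.mpr hle
    rw [Ideal.IsDedekindDomain.ramificationIdx'_eq_normalizedFactors_count hmapne hP hP0] at he
    change Multiset.count P (UniqueFactorizationMonoid.normalizedFactors (Ideal.map f p)) = 1 at he
    rw [UniqueFactorizationMonoid.dvd_iff_normalizedFactors_le_normalizedFactors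
        (pow_ne_zero _ hP0) hmapne, UniqueFactorizationMonoid.normalizedFactors_pow,
      UniqueFactorizationMonoid.normalizedFactors_irreducible hPirr, normalize_eq,
      Multiset.nsmul_singleton, ← Multiset.le_count_iff_replicate_le] at hdvd
    omega
  intro hmem
  obtain ⟨J, hJ⟩ : p ∣ Ideal.span {x} :=
    Ideal.dvd_iff_le.mpr ((Ideal.span_singleton_le_iff_mem p).mpr hx1)
  have hpJ : ¬ p ∣ J := by
    intro h
    exact hx2 ((Ideal.span_singleton_le_iff_mem _).mp
      (Ideal.le_of_dvd (by rw [hJ, pow_two]; exact mul_dvd_mul_left p h)))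
  have h2 : P ^ 2 ∣ Ideal.span {f x} :=
    Ideal.dvd_iff_le.mpr ((Ideal.span_singleton_le_iff_mem _).mpr hmem)
  have hspan : Ideal.span {f x} = Ideal.map f (Ideal.span {x}) := by
    rw [Ideal.map_span, Set.image_singleton]
  rw [hspan, hJ, Ideal.map_mul] at h2
  have h3 : ¬ P ∣ Ideal.map f J := by
    intro h
    refine hpJ (Ideal.dvd_iff_le.mpr ?_)
    calc J ≤ Ideal.comap f (Ideal.map f J) := Ideal.le_comap_map
      _ ≤ Ideal.comap f P := Ideal.comap_mono (Ideal.dvd_iff_le.mp h)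
      _ = p := hcomap
  exact hnle (Ideal.dvd_iff_le.mp (hPprime.pow_dvd_of_dvd_mul_right 2 h3 h2))


/-- Let `L/K` be an extension of number fields, `η` a unit of `𝓞 K`, and `𝔭` a prime ideal of
`𝓞 K` which splits completely in `L/K` (every prime of `𝓞 L` above `𝔭` has ramification index
and residue degree `1`).  If `𝔭` is a non-Wieferich prime of `𝓞 K` with respect to `η`, then
every prime ideal `𝔓` of `𝓞 L` lying over `𝔭` is a non-Wieferich prime of `𝓞 L` with respect
to `η`. -/
theorem isNonWieferich_of_splitsCompletely (K L : Type*) [Field K] [NumberField K]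
    [Field L] [NumberField L] [Algebra K L] (η : (𝓞 K)ˣ)
    (𝔭 : Ideal (𝓞 K)) (h𝔭p : 𝔭.IsPrime) (h𝔭b : 𝔭 ≠ ⊥)
    (hsplit : ∀ 𝔓 : Ideal (𝓞 L), 𝔓.IsPrime → 𝔓.comap (algebraMap (𝓞 K) (𝓞 L)) = 𝔭 →
      Ideal.ramificationIdx' 𝔭 𝔓 = 1 ∧
      Ideal.inertiaDeg' 𝔭 𝔓 = 1)
    (hw : IsNonWieferich (η : 𝓞 K) 𝔭) :
    ∀ 𝔓 : Ideal (𝓞 L), 𝔓.IsPrime → 𝔓.comap (algebraMap (𝓞 K) (𝓞 L)) = 𝔭 →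
      IsNonWieferich (algebraMap (𝓞 K) (𝓞 L) (η : 𝓞 K)) 𝔓 := by
  intro 𝔓 h𝔓p hcomap
  set f := algebraMap (𝓞 K) (𝓞 L) with hf
  have hinj : Function.Injective f := FaithfulSMul.algebraMap_injective (𝓞 K) (𝓞 L)
  have hP0 : 𝔓 ≠ ⊥ := by
    rintro rfl
    rw [← RingHom.ker_eq_comap_bot, (RingHom.injective_iff_ker_eq_bot f).mp hinj] at hcomap
    exact h𝔭b hcomap.symm
  obtain ⟨he, hfdeg⟩ := hsplit 𝔓 h𝔓p hcomap
  haveI : 𝔭.IsMaximal := h𝔭p.isMaximal h𝔭b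
  haveI : 𝔓.IsMaximal := h𝔓p.isMaximal hP0
  haveI : 𝔓.LiesOver 𝔭 := ⟨hcomap.symm⟩
  -- the norms agree
  have hnorm : Ideal.absNorm 𝔓 = Ideal.absNorm 𝔭 := by
    rw [Ideal.inertiaDeg'_algebraMap] at hfdeg
    letI := Ideal.Quotient.field 𝔭
    obtain ⟨b⟩ := (finrank_eq_one_iff (K := 𝓞 K ⧸ 𝔭) (V := 𝓞 L ⧸ 𝔓) (Fin 1)).mp hfdeg
    rw [Ideal.absNorm_apply, Ideal.absNorm_apply, Submodule.cardQuot_apply,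
      Submodule.cardQuot_apply]
    exact Nat.card_congr (b.repr.toEquiv.trans (Finsupp.equivFunOnFinite.trans
      (Equiv.funUnique (Fin 1) _)))
  have hmapne : Ideal.map f 𝔭 ≠ ⊥ := fun h =>
    h𝔭b ((Ideal.map_eq_bot_iff_of_injective hinj).mp h)
  set x : 𝓞 K := (η : 𝓞 K) ^ (Ideal.absNorm 𝔭 - 1) - 1 with hx
  have hfx : (f (η : 𝓞 K)) ^ (Ideal.absNorm 𝔓 - 1) - 1 = f x := by
    rw [hnorm, hx, map_sub, map_pow, map_one]
  constructor
  · rw [hfx]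
    have : x ∈ Ideal.comap f 𝔓 := hcomap.symm ▸ hw.1
    exact Ideal.mem_comap.mp this
  · rw [hfx]
    exact not_mem_pow_two_of_ramificationIdx_eq_one f h𝔓p hP0 hmapne hcomap he hw.1 hw.2
end
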